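/- Let m ≥ 1, n ≥ 2, and let σ be an independent set of C_{m,n} with π(σ) ≠ ∅. (i) If j is a free even position of one of the intervals of σ, then the independent set σ ∪ {(1,j)} has the same closure as σ (i.e. σ ∪ {(1,j)} ∼ σ), π_o(σ ∪ {(1,j)}) = π_o(σ), and π_e(σ ∪ {(1,j)}) = π_e(σ) ∪ {j}. (ii) If σ has at least two intervals (i.e. |π(σ)| ≥ 2) and x ∈ π_e(σ), then σ ∖ {(1,x)} has the same closure as σ (i.e. σ ∖ {(1,x)} ∼ σ), π_o(σ ∖ {(1,x)}) = π_o(σ), and π_e(σ ∖ {(1,x)}) = π_e(σ) ∖ {x}. -/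

import Mathlib

/-- Adjacency in the cylinder graph: vertices are pairs (row, column) with
rows in {1,…,m} (enforced separately) and columns in ℤ/nℤ.  Two distinct
vertices are adjacent iff they are in the same row and their columns differ
by ±1 in ℤ/nℤ, or they are in the same column and their rows differ by 1. -/
def cylAdj (n : ℕ) (v w : ℕ × ZMod n) : Prop :=
  v ≠ w ∧ ((v.1 = w.1 ∧ (w.2 = v.2 + 1 ∨ v.2 = w.2 + 1)) ∨
    (v.2 = w.2 ∧ (v.1 + 1 = w.1 ∨ w.1 + 1 = v.1)))

/-- `σ` is an independent set of the cylinder graph `C_{m,n}`: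
its vertices lie in {1,…,m} × ℤ/nℤ and no two of them are adjacent. -/
def cylIndep (m n : ℕ) (σ : Finset (ℕ × ZMod n)) : Prop :=
  (∀ v ∈ σ, 1 ≤ v.1 ∧ v.1 ≤ m) ∧ ∀ v ∈ σ, ∀ w ∈ σ, ¬ cylAdj n v w

/-- Partition function of the hard square model at activity −1 on `C_{m,n}`:
`Z(C_{m,n}) = Σ_σ (−1)^{|σ|}` over all independent sets `σ`. -/
noncomputable def Zcyl (m n : ℕ) : ℤ :=
  ∑ᶠ σ ∈ {σ : Finset (ℕ × ZMod n) | cylIndep m n σ}, (-1 : ℤ) ^ σ.card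

/-- `π(σ)`: the set of columns `j ∈ ℤ/nℤ` such that `(1,j) ∈ σ`. -/
def piRow (n : ℕ) (σ : Finset (ℕ × ZMod n)) : Finset (ZMod n) :=
  (σ.filter fun v => v.1 = 1).image Prod.snd

/-- For a set `P ⊆ ℤ/nℤ` of columns, `cOffset n P j` is the least `r ≥ 1`
with `j − r ∈ P` (and `0` if no such `r` exists, i.e. if `P = ∅`).
For `j` a position of an interval of `P` this is the offset `r` of `j` in its
interval (so `j` is an even position iff `cOffset n P j` is positive and even);
for `x ∈ P` it is the length of the interval ending at `x`, i.e. the cyclic gap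
from the previous element of `P` to `x`. -/
noncomputable def cOffset (n : ℕ) (P : Finset (ZMod n)) (j : ZMod n) : ℕ :=
  sInf {r : ℕ | 0 < r ∧ j - (r : ZMod n) ∈ P}

/-- `π_e`: the elements of `P` sitting in even position of their interval. -/
noncomputable def piE (n : ℕ) (P : Finset (ZMod n)) : Finset (ZMod n) :=
  P.filter fun x => 0 < cOffset n P x ∧ Even (cOffset n P x)

/-- `π_o`: the elements of `P` sitting in odd position of their interval. -/
noncomputable def piO (n : ℕ) (P : Finset (ZMod n)) : Finset (ZMod n) :=
  P.filter fun x => Odd (cOffset n P x)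

/-- The column `j` is free in `σ`: `(1,j) ∉ σ` and `σ ∪ {(1,j)}` is independent. -/
def freeCol (m n : ℕ) (σ : Finset (ℕ × ZMod n)) (j : ZMod n) : Prop :=
  ((1 : ℕ), j) ∉ σ ∧ cylIndep m n (insert ((1 : ℕ), j) σ)

/-- The closure `σ̂` of `σ`: `σ` together with all `(1,j)` where `j` is a free
even position of one of the intervals of `σ` (if `π(σ) = ∅` nothing is added,
since then `cOffset` vanishes identically). -/
def clo (m n : ℕ) (σ : Finset (ℕ × ZMod n)) : Set (ℕ × ZMod n) :=
  ↑σ ∪ {v | v.1 = 1 ∧ 0 < cOffset n (piRow n σ) v.2 ∧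
    Even (cOffset n (piRow n σ) v.2) ∧ freeCol m n σ v.2}

/-- The equivalence class `X_σ` of `σ`: all independent sets with the same closure. -/
def Xclass (m n : ℕ) (σ : Finset (ℕ × ZMod n)) : Set (Finset (ℕ × ZMod n)) :=
  {τ | cylIndep m n τ ∧ clo m n τ = clo m n σ}


section closureAux

variable {n : ℕ} [NeZero n]

lemma cOffset_set_nonempty {P : Finset (ZMod n)} (hP : P.Nonempty) (j : ZMod n) :
    {r : ℕ | 0 < r ∧ j - (r : ZMod n) ∈ P}.Nonempty := by
  obtain ⟨x, hx⟩ := hP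
  by_cases h : x = j
  · exact ⟨n, Nat.pos_of_ne_zero (NeZero.ne n), by
      simpa [ZMod.natCast_self, h] using hx⟩
  · refine ⟨(j - x).val, ?_, ?_⟩
    · have : j - x ≠ 0 := sub_ne_zero.mpr (Ne.symm h)
      exact Nat.pos_of_ne_zero fun h0 => this ((ZMod.val_eq_zero _).mp h0)
    · rw [ZMod.natCast_zmod_val]; simpa using hx

lemma cOffset_spec {P : Finset (ZMod n)} (hP : P.Nonempty) (j : ZMod n) :
    0 < cOffset n P j ∧ j - (cOffset n P j : ZMod n) ∈ P :=
  Nat.sInf_mem (cOffset_set_nonempty hP j)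

lemma cOffset_pos {P : Finset (ZMod n)} (hP : P.Nonempty) (j : ZMod n) :
    0 < cOffset n P j := (cOffset_spec hP j).1

omit [NeZero n] in
lemma cOffset_min {P : Finset (ZMod n)} {j : ZMod n} {r : ℕ} (hr : 0 < r)
    (hlt : r < cOffset n P j) : j - (r : ZMod n) ∉ P := fun hmem =>
  Nat.notMem_of_lt_sInf hlt ⟨hr, hmem⟩

omit [NeZero n] in
lemma cOffset_eq {P : Finset (ZMod n)} {j : ZMod n} {d : ℕ} (hd : 0 < d)
    (hmem : j - (d : ZMod n) ∈ P)
    (hmin : ∀ r, 0 < r → r < d → j - (r : ZMod n) ∉ P) : cOffset n P j = d := by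
  have h1 : cOffset n P j ≤ d := Nat.sInf_le ⟨hd, hmem⟩
  rcases h1.lt_or_eq with h | h
  · obtain ⟨h0, hm⟩ := Nat.sInf_mem (⟨d, hd, hmem⟩ :
      {r : ℕ | 0 < r ∧ j - (r : ZMod n) ∈ P}.Nonempty)
    exact absurd hm (hmin _ h0 h)
  · exact h

lemma cOffset_lt_n {P : Finset (ZMod n)} {j x : ZMod n} (hx : x ∈ P) (hxj : x ≠ j) :
    cOffset n P j < n := by
  have hpos : 0 < (j - x).val := by
    have : j - x ≠ 0 := sub_ne_zero.mpr (Ne.symm hxj)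
    exact Nat.pos_of_ne_zero fun h0 => this ((ZMod.val_eq_zero _).mp h0)
  have hle : cOffset n P j ≤ (j - x).val :=
    Nat.sInf_le ⟨hpos, by rw [ZMod.natCast_zmod_val]; simpa using hx⟩
  exact hle.trans_lt (ZMod.val_lt _)

/-- Removing `x` from `Q` either keeps the offset of `y` or increases it by the
offset of `x` (the gap below `x`). -/
lemma cOffset_erase {Q : Finset (ZMod n)} {x : ZMod n} (hx : x ∈ Q)
    (hne : (Q.erase x).Nonempty) (y : ZMod n) :
    cOffset n (Q.erase x) y = cOffset n Q y ∨
    cOffset n (Q.erase x) y = cOffset n Q y + cOffset n Q x := by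
  obtain ⟨z, hz⟩ := hne
  have hzQ : z ∈ Q := Finset.mem_of_mem_erase hz
  have hzx : z ≠ x := Finset.ne_of_mem_erase hz
  have hQ : Q.Nonempty := ⟨x, hx⟩
  set d := cOffset n Q x with hd
  set f := cOffset n Q y with hf
  have hd0 : 0 < d := cOffset_pos hQ x
  have hdmem : x - (d : ZMod n) ∈ Q := (cOffset_spec hQ x).2
  have hdn : d < n := cOffset_lt_n hzQ hzx
  have hf0 : 0 < f := cOffset_pos hQ y
  have hfmem : y - (f : ZMod n) ∈ Q := (cOffset_spec hQ y).2
  have hdne : (d : ZMod n) ≠ 0 := fun h0 => by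
    rw [ZMod.natCast_eq_zero_iff] at h0
    exact absurd (Nat.le_of_dvd hd0 h0) (not_le.mpr hdn)
  by_cases hcase : y - (f : ZMod n) = x
  · right
    refine cOffset_eq (by omega) ?_ ?_
    · have : y - ((f + d : ℕ) : ZMod n) = x - (d : ZMod n) := by
        push_cast; rw [sub_add_eq_sub_sub, hcase]
      rw [this]
      refine Finset.mem_erase.mpr ⟨?_, hdmem⟩
      intro h
      exact hdne (by linear_combination -h)
    · intro r hr0 hrlt hrmem
      have hrQ : y - (r : ZMod n) ∈ Q := Finset.mem_of_mem_erase hrmem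
      rcases lt_trichotomy r f with h | h | h
      · exact cOffset_min hr0 h hrQ
      · subst h; exact (Finset.ne_of_mem_erase hrmem) hcase
      · have hsub : y - (r : ZMod n) = x - ((r - f : ℕ) : ZMod n) := by
          have : (r : ZMod n) = (f : ZMod n) + ((r - f : ℕ) : ZMod n) := by
            rw [← Nat.cast_add, Nat.add_sub_cancel' h.le]
          rw [this, ← hcase]; ring
        rw [hsub] at hrQ
        exact cOffset_min (by omega) (by omega) hrQ
  · left
    refine cOffset_eq hf0 (Finset.mem_erase.mpr ⟨hcase, hfmem⟩) ?_
    intro r hr0 hrlt hrmem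
    exact cOffset_min hr0 hrlt (Finset.mem_of_mem_erase hrmem)

lemma cOffset_erase_parity {Q : Finset (ZMod n)} {x : ZMod n} (hx : x ∈ Q)
    (hne : (Q.erase x).Nonempty) (heven : Even (cOffset n Q x)) (y : ZMod n) :
    Even (cOffset n (Q.erase x) y) ↔ Even (cOffset n Q y) := by
  rcases cOffset_erase hx hne y with h | h <;> rw [h] <;>
    simp [Nat.even_add, heven]

lemma cOffset_insert_self {P : Finset (ZMod n)} (hP : P.Nonempty) {j : ZMod n}
    (hj : j ∉ P) : cOffset n (insert j P) j = cOffset n P j := by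
  obtain ⟨x, hx⟩ := hP
  refine cOffset_eq (cOffset_pos ⟨x, hx⟩ j)
    (Finset.mem_insert_of_mem (cOffset_spec ⟨x, hx⟩ j).2) ?_
  intro r hr0 hrlt
  have hdn : cOffset n P j < n := cOffset_lt_n hx (fun h => hj (h ▸ hx))
  rw [Finset.mem_insert]
  push_neg
  constructor
  · intro h
    have h0 : (r : ZMod n) = 0 := by linear_combination -h
    rw [ZMod.natCast_eq_zero_iff] at h0
    have := Nat.le_of_dvd hr0 h0
    omega
  · exact cOffset_min hr0 hrlt

lemma cOffset_succ {P : Finset (ZMod n)} (hP : P.Nonempty) {j : ZMod n} (hj : j ∉ P) :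
    cOffset n P (j + 1) = cOffset n P j + 1 := by
  refine cOffset_eq (by omega) ?_ ?_
  · have : j + 1 - ((cOffset n P j + 1 : ℕ) : ZMod n) = j - (cOffset n P j : ZMod n) := by
      push_cast; ring
    rw [this]; exact (cOffset_spec hP j).2
  · intro r hr0 hrlt
    rcases Nat.lt_or_ge r 2 with h | h
    · have : r = 1 := by omega
      subst this
      simpa using hj
    · have hcast : j + 1 - (r : ZMod n) = j - ((r - 1 : ℕ) : ZMod n) := by
        rw [Nat.cast_sub (by omega)]; push_cast; ring
      rw [hcast]
      exact cOffset_min (by omega) (by omega)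

lemma cOffset_pred {P : Finset (ZMod n)} (hP : P.Nonempty) {j : ZMod n} (hj : j ∉ P)
    (h2 : 2 ≤ cOffset n P j) :
    cOffset n P (j - 1) = cOffset n P j - 1 := by
  refine cOffset_eq (by omega) ?_ ?_
  · have : j - 1 - ((cOffset n P j - 1 : ℕ) : ZMod n) = j - (cOffset n P j : ZMod n) := by
      rw [Nat.cast_sub (by omega)]; push_cast; ring
    rw [this]; exact (cOffset_spec hP j).2
  · intro r hr0 hrlt
    have hcast : j - 1 - (r : ZMod n) = j - ((r + 1 : ℕ) : ZMod n) := by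
      push_cast; ring
    rw [hcast]
    exact cOffset_min (by omega) (by omega)

omit [NeZero n] in
lemma mem_piRow {σ : Finset (ℕ × ZMod n)} {j : ZMod n} :
    j ∈ piRow n σ ↔ ((1 : ℕ), j) ∈ σ := by
  simp only [piRow, Finset.mem_image, Finset.mem_filter]
  constructor
  · rintro ⟨⟨a, b⟩, ⟨hm, h1⟩, h2⟩
    dsimp at h1 h2
    subst h1; subst h2; exact hm
  · intro h; exact ⟨_, ⟨h, rfl⟩, rfl⟩

omit [NeZero n] in
lemma piRow_insert {σ : Finset (ℕ × ZMod n)} {j : ZMod n} :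
    piRow n (insert ((1 : ℕ), j) σ) = insert j (piRow n σ) := by
  ext y
  simp only [mem_piRow, Finset.mem_insert, Prod.mk.injEq, true_and, mem_piRow]

omit [NeZero n] in
lemma piRow_erase {σ : Finset (ℕ × ZMod n)} {x : ZMod n} :
    piRow n (σ.erase ((1 : ℕ), x)) = (piRow n σ).erase x := by
  ext y
  simp only [mem_piRow, Finset.mem_erase, ne_eq, Prod.mk.injEq, true_and, mem_piRow]

omit [NeZero n] in
lemma cylIndep_subset {m : ℕ} {σ τ : Finset (ℕ × ZMod n)} (h : τ ⊆ σ)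
    (hσ : cylIndep m n σ) : cylIndep m n τ :=
  ⟨fun v hv => hσ.1 v (h hv), fun v hv w hw => hσ.2 v (h hv) w (h hw)⟩

omit [NeZero n] in
lemma freeCol_anti {m : ℕ} {σ τ : Finset (ℕ × ZMod n)} (h : σ ⊆ τ) {y : ZMod n} :
    freeCol m n τ y → freeCol m n σ y := fun ⟨h1, h2⟩ =>
  ⟨fun hm => h1 (h hm), cylIndep_subset (Finset.insert_subset_insert _ h) h2⟩

omit [NeZero n] in
lemma not_adj_row1 {y j : ZMod n} (hyj : y ≠ j) (h1 : y ≠ j + 1) (h2 : j ≠ y + 1) :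
    ¬ cylAdj n ((1 : ℕ), y) ((1 : ℕ), j) := by
  rintro ⟨hne, ⟨_, h | h⟩ | ⟨hcol, h | h⟩⟩
  · exact h2 h
  · exact h1 h
  · exact absurd h (by omega)
  · exact absurd h (by omega)

omit [NeZero n] in
lemma not_adj_self {v : ℕ × ZMod n} : ¬ cylAdj n v v := fun h => h.1 rfl

omit [NeZero n] in
lemma freeCol_insert {m : ℕ} {σ : Finset (ℕ × ZMod n)} {j y : ZMod n}
    (hfj : freeCol m n σ j) (hfy : freeCol m n σ y)
    (hyj : y ≠ j) (h1 : y ≠ j + 1) (h2 : j ≠ y + 1) :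
    freeCol m n (insert ((1 : ℕ), j) σ) y := by
  refine ⟨?_, ?_, ?_⟩
  · simp only [Finset.mem_insert, Prod.mk.injEq, true_and]
    rintro (h | h)
    · exact hyj h
    · exact hfy.1 h
  · intro v hv
    simp only [Finset.mem_insert] at hv
    rcases hv with h | h | h
    · exact h ▸ hfy.2.1 _ (Finset.mem_insert_self _ _)
    · exact h ▸ hfj.2.1 _ (Finset.mem_insert_self _ _)
    · exact hfy.2.1 _ (Finset.mem_insert_of_mem h)
  · intro v hv w hw
    simp only [Finset.mem_insert] at hv hw
    rcases hv with hv | hv | hv <;> rcases hw with hw | hw | hw <;> subst_vars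
    · exact not_adj_self
    · exact not_adj_row1 hyj h1 h2
    · exact hfy.2.2 _ (Finset.mem_insert_self _ _) _ (Finset.mem_insert_of_mem hw)
    · exact not_adj_row1 (Ne.symm hyj) h2 h1
    · exact not_adj_self
    · exact hfj.2.2 _ (Finset.mem_insert_self _ _) _ (Finset.mem_insert_of_mem hw)
    · exact hfy.2.2 _ (Finset.mem_insert_of_mem hv) _ (Finset.mem_insert_self _ _)
    · exact hfj.2.2 _ (Finset.mem_insert_of_mem hv) _ (Finset.mem_insert_self _ _)
    · exact hfy.2.2 _ (Finset.mem_insert_of_mem hv) _ (Finset.mem_insert_of_mem hw)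

omit [NeZero n] in
lemma mem_clo {m : ℕ} {σ : Finset (ℕ × ZMod n)} {v : ℕ × ZMod n} :
    v ∈ clo m n σ ↔ v ∈ σ ∨ (v.1 = 1 ∧ 0 < cOffset n (piRow n σ) v.2 ∧
      Even (cOffset n (piRow n σ) v.2) ∧ freeCol m n σ v.2) := Iff.rfl

end closureAux

/-- Let `σ` be an independent set of `C_{m,n}` with `π(σ) ≠ ∅`.
(i) If `j` is a free even position of one of the intervals of `σ`, then
`σ ∪ {(1,j)} ∼ σ`, `π_o(σ ∪ {(1,j)}) = π_o(σ)` and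
`π_e(σ ∪ {(1,j)}) = π_e(σ) ∪ {j}`.
(ii) If `|π(σ)| ≥ 2` and `x ∈ π_e(σ)`, then `σ ∖ {(1,x)} ∼ σ`,
`π_o(σ ∖ {(1,x)}) = π_o(σ)` and `π_e(σ ∖ {(1,x)}) = π_e(σ) ∖ {x}`. -/
theorem closure_structure (m n : ℕ) (hm : 1 ≤ m) (hn : 2 ≤ n)
    (σ : Finset (ℕ × ZMod n)) (hσ : cylIndep m n σ) (hπ : (piRow n σ).Nonempty) :
    (∀ j : ZMod n, 0 < cOffset n (piRow n σ) j → Even (cOffset n (piRow n σ) j) →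
      freeCol m n σ j →
        clo m n (insert ((1 : ℕ), j) σ) = clo m n σ ∧
        piO n (piRow n (insert ((1 : ℕ), j) σ)) = piO n (piRow n σ) ∧
        piE n (piRow n (insert ((1 : ℕ), j) σ)) = insert j (piE n (piRow n σ))) ∧
    (2 ≤ (piRow n σ).card → ∀ x ∈ piE n (piRow n σ),
        clo m n (σ.erase ((1 : ℕ), x)) = clo m n σ ∧
        piO n (piRow n (σ.erase ((1 : ℕ), x))) = piO n (piRow n σ) ∧
        piE n (piRow n (σ.erase ((1 : ℕ), x))) = (piE n (piRow n σ)).erase x) := by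
  haveI : NeZero n := ⟨by omega⟩
  constructor
  · -- Part (i)
    intro j hpos heven hfree
    have hjP : j ∉ piRow n σ := fun h => hfree.1 (mem_piRow.mp h)
    set P := piRow n σ with hPdef
    set d := cOffset n P j with hd
    have hP' : piRow n (insert ((1 : ℕ), j) σ) = insert j P := piRow_insert
    have hpe : (insert j P).erase j = P := Finset.erase_insert hjP
    have hoffj : cOffset n (insert j P) j = d := cOffset_insert_self hπ hjP
    have hne' : (insert j P).Nonempty := Finset.insert_nonempty _ _
    have hparity : ∀ y, Even (cOffset n (insert j P) y) ↔ Even (cOffset n P y) := by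
      intro y
      have h := cOffset_erase_parity (Finset.mem_insert_self j P)
        (by rw [hpe]; exact hπ) (by rw [hoffj]; exact heven) y
      rw [hpe] at h
      exact h.symm
    have hd2 : 2 ≤ d := by
      obtain ⟨k, hk⟩ := heven; omega
    have hoffsucc : cOffset n P (j + 1) = d + 1 := cOffset_succ hπ hjP
    have hoffpred : cOffset n P (j - 1) = d - 1 := cOffset_pred hπ hjP hd2
    refine ⟨?_, ?_, ?_⟩
    · -- closure equality
      ext v
      rw [mem_clo, mem_clo, hP']
      constructor
      · rintro (hv | ⟨hv1, hv2, hv3, hv4⟩)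
        · rcases Finset.mem_insert.mp hv with h | h
          · subst h
            exact Or.inr ⟨rfl, hpos, heven, hfree⟩
          · exact Or.inl h
        · exact Or.inr ⟨hv1, cOffset_pos hπ v.2, (hparity v.2).mp hv3,
            freeCol_anti (Finset.subset_insert _ _) hv4⟩
      · rintro (hv | ⟨hv1, hv2, hv3, hv4⟩)
        · exact Or.inl (Finset.mem_insert_of_mem hv)
        · by_cases hvj : v.2 = j
          · refine Or.inl (Finset.mem_insert.mpr (Or.inl ?_))
            exact Prod.ext hv1 hvj
          · refine Or.inr ⟨hv1, cOffset_pos hne' v.2, (hparity v.2).mpr hv3, ?_⟩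
            refine freeCol_insert hfree hv4 hvj ?_ ?_
            · intro h
              rw [h, hoffsucc] at hv3
              obtain ⟨k, hk⟩ := hv3
              obtain ⟨l, hl⟩ := heven
              omega
            · intro h
              have : v.2 = j - 1 := by rw [h]; ring
              rw [this, hoffpred] at hv3
              obtain ⟨k, hk⟩ := hv3
              obtain ⟨l, hl⟩ := heven
              omega
    · -- piO
      ext y
      rw [hP']
      simp only [piO, Finset.mem_filter, Finset.mem_insert]
      constructor
      · rintro ⟨h1 | h1, h2⟩
        · subst h1
          rw [hoffj] at h2
          exact absurd heven (Nat.not_even_iff_odd.mpr h2)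
        · refine ⟨h1, ?_⟩
          rwa [← Nat.not_even_iff_odd, hparity, Nat.not_even_iff_odd] at h2
      · rintro ⟨h1, h2⟩
        refine ⟨Or.inr h1, ?_⟩
        rwa [← Nat.not_even_iff_odd, ← hparity y, Nat.not_even_iff_odd] at h2
    · -- piE
      ext y
      rw [hP']
      simp only [piE, Finset.mem_filter, Finset.mem_insert]
      constructor
      · rintro ⟨h1 | h1, _, h3⟩
        · exact Or.inl h1
        · exact Or.inr ⟨h1, cOffset_pos hπ y, (hparity y).mp h3⟩
      · rintro (h | ⟨h1, _, h3⟩)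
        · subst h
          exact ⟨Or.inl rfl, by rw [hoffj]; exact ⟨hpos, heven⟩⟩
        · exact ⟨Or.inr h1, cOffset_pos hne' y, (hparity y).mpr h3⟩
  · -- Part (ii)
    intro hcard x hxE
    set P := piRow n σ with hPdef
    obtain ⟨hxP, hxpos, hxeven⟩ := Finset.mem_filter.mp hxE
    have hx1 : ((1 : ℕ), x) ∈ σ := mem_piRow.mp hxP
    set d := cOffset n P x with hd
    have hPe : piRow n (σ.erase ((1 : ℕ), x)) = P.erase x := piRow_erase
    have hne : (P.erase x).Nonempty := by
      rw [← Finset.card_pos, Finset.card_erase_of_mem hxP]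
      omega
    have hparity : ∀ y, Even (cOffset n (P.erase x) y) ↔ Even (cOffset n P y) :=
      cOffset_erase_parity hxP hne hxeven
    have hxPe : x ∉ P.erase x := Finset.notMem_erase x P
    have hoffx : cOffset n (P.erase x) x = d := by
      have h := cOffset_insert_self hne hxPe
      rw [Finset.insert_erase hxP] at h
      exact h.symm
    have hd2 : 2 ≤ d := by
      obtain ⟨k, hk⟩ := hxeven; omega
    have hoffsucc : cOffset n (P.erase x) (x + 1) = d + 1 := by
      rw [cOffset_succ hne hxPe, hoffx]
    have hoffpred : cOffset n (P.erase x) (x - 1) = d - 1 := by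
      rw [cOffset_pred hne hxPe (by rw [hoffx]; exact hd2), hoffx]
    have hfreex : freeCol m n (σ.erase ((1 : ℕ), x)) x :=
      ⟨Finset.notMem_erase _ _, by rw [Finset.insert_erase hx1]; exact hσ⟩
    refine ⟨?_, ?_, ?_⟩
    · -- closure equality
      ext v
      rw [mem_clo, mem_clo, hPe]
      constructor
      · rintro (hv | ⟨hv1, hv2, hv3, hv4⟩)
        · exact Or.inl (Finset.mem_of_mem_erase hv)
        · by_cases hvx : v.2 = x
          · refine Or.inl ?_
            have : v = ((1 : ℕ), x) := Prod.ext hv1 hvx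
            rw [this]; exact hx1
          · refine Or.inr ⟨hv1, cOffset_pos hπ v.2, (hparity v.2).mp hv3, ?_⟩
            have hfc : freeCol m n (insert ((1 : ℕ), x) (σ.erase ((1 : ℕ), x))) v.2 := by
              refine freeCol_insert hfreex hv4 hvx ?_ ?_
              · intro h
                rw [h, hoffsucc] at hv3
                obtain ⟨k, hk⟩ := hv3
                obtain ⟨l, hl⟩ := hxeven
                omega
              · intro h
                have hv2' : v.2 = x - 1 := by rw [h]; ring
                rw [hv2', hoffpred] at hv3
                obtain ⟨k, hk⟩ := hv3
                obtain ⟨l, hl⟩ := hxeven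
                omega
            rwa [Finset.insert_erase hx1] at hfc
      · rintro (hv | ⟨hv1, hv2, hv3, hv4⟩)
        · by_cases hvx : v = ((1 : ℕ), x)
          · subst hvx
            exact Or.inr ⟨rfl, by rw [hoffx]; exact hxpos, by rw [hoffx]; exact hxeven,
              hfreex⟩
          · exact Or.inl (Finset.mem_erase.mpr ⟨hvx, hv⟩)
        · refine Or.inr ⟨hv1, cOffset_pos hne v.2, (hparity v.2).mpr hv3, ?_⟩
          exact freeCol_anti (Finset.erase_subset _ _) hv4
    · -- piO
      ext y
      rw [hPe]
      simp only [piO, Finset.mem_filter, Finset.mem_erase]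
      constructor
      · rintro ⟨⟨hyx, hyP⟩, h2⟩
        refine ⟨hyP, ?_⟩
        rwa [← Nat.not_even_iff_odd, hparity, Nat.not_even_iff_odd] at h2
      · rintro ⟨hyP, h2⟩
        have hyx : y ≠ x := by
          intro h; subst h
          exact (Nat.not_even_iff_odd.mpr h2) hxeven
        refine ⟨⟨hyx, hyP⟩, ?_⟩
        rwa [← Nat.not_even_iff_odd, ← hparity y, Nat.not_even_iff_odd] at h2
    · -- piE
      ext y
      rw [hPe]
      simp only [piE, Finset.mem_filter, Finset.mem_erase]
      constructor
      · rintro ⟨⟨hyx, hyP⟩, _, h3⟩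
        exact ⟨hyx, hyP, cOffset_pos hπ y, (hparity y).mp h3⟩
      · rintro ⟨hyx, hyP, _, h3⟩
        exact ⟨⟨hyx, hyP⟩, cOffset_pos hne y, (hparity y).mpr h3⟩
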